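/- (Correctness of spectral WA extraction from a complete prefix-closed sub-block.) Let Σ be a finite alphabet and f : List Σ → ℝ a function with finite Hankel rank r. Let 𝒫, 𝒮 be finite sets of strings with 𝒫 prefix-closed, λ ∈ 𝒫, λ ∈ 𝒮, and suppose the sub-block H_B ∈ ℝ^{𝒫×𝒮}, H_B(u,v) = f(u ++ v), has rank exactly r. Let H_B = P·S be a rank factorization with P ∈ ℝ^{𝒫×r}, S ∈ ℝ^{r×𝒮}, and let P⁺ ∈ ℝ^{r×𝒫} and S⁺ ∈ ℝ^{𝒮×r} satisfy P⁺·P = I_r and S·S⁺ = I_r. For each σ ∈ Σ define H_σ ∈ ℝ^{𝒫×𝒮} by H_σ(u,v) = f(u ++ [σ] ++ v), let h_{𝒫,λ} ∈ ℝ^{𝒫} be the vector h_{𝒫,λ}(u) = f(u), and h_{λ,𝒮} ∈ ℝ^{𝒮} be the vector h_{λ,𝒮}(v) = f(v). Then the weighted automaton with r states given by α0ᵀ = h_{λ,𝒮}ᵀ · S⁺, M_σ = P⁺ · H_σ · S⁺ for each σ ∈ Σ, and α∞ = P⁺ · h_{𝒫,λ}, computes f: for every string w ∈ List Σ, α0ᵀ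 M_w α∞ = f(w). Since it has r states, it is a minimal WA computing f. -/

import Mathlib

open Matrix

/-- correctness of spectral WA extraction from a complete prefix-closed
sub-block: given `f` of finite Hankel rank `r`, a prefix-closed set `P` and a set `S` of
strings, both containing the empty string, such that the sub-block `H_B` has rank exactly
`r`, a rank factorization `H_B = Pm * Sm` and one-sided pseudo-inverses `Pp, Sp` with
`Pp * Pm = 1` and `Sm * Sp = 1`, the weighted automaton with `r` states defined by
`α0ᵀ = h_{λ,S}ᵀ Sp`, `M σ = Pp * H_σ * Sp`, `α∞ = Pp * h_{P,λ}` computes `f`. -/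
theorem spectral_extraction_correct {A : Type*} [Fintype A]
    (f : List A → ℝ) (r : ℕ)
    (hr : Module.rank ℝ
        ↥(Submodule.span ℝ
            {g : List A → ℝ | ∃ u : List A, g = fun v : List A => f (u ++ v)}) = r)
    (P S : Finset (List A))
    (hpc : ∀ w ∈ P, ∀ u : List A, u <+: w → u ∈ P)
    (hlamP : ([] : List A) ∈ P) (hlamS : ([] : List A) ∈ S)
    (hrank : (Matrix.of fun (u : ↥P) (v : ↥S) => f (↑u ++ ↑v)).rank = r)
    (Pm : Matrix ↥P (Fin r) ℝ) (Sm : Matrix (Fin r) ↥S ℝ)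
    (hfact : (Matrix.of fun (u : ↥P) (v : ↥S) => f (↑u ++ ↑v)) = Pm * Sm)
    (Pp : Matrix (Fin r) ↥P ℝ) (Sp : Matrix ↥S (Fin r) ℝ)
    (hPp : Pp * Pm = 1) (hSp : Sm * Sp = 1) :
    ∀ w : List A,
      Matrix.vecMul (Matrix.vecMul (fun v : ↥S => f ↑v) Sp)
          ((w.map fun σ : A =>
              Pp * (Matrix.of fun (u : ↥P) (v : ↥S) => f (↑u ++ [σ] ++ ↑v)) * Sp).prod)
        ⬝ᵥ Pp.mulVec (fun u : ↥P => f ↑u) = f w := by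
  classical
  set h : List A → (List A → ℝ) := fun u v => f (u ++ v) with hh
  set H : Matrix ↥P ↥S ℝ := Matrix.of fun (u : ↥P) (v : ↥S) => f (↑u ++ ↑v) with hHdef
  -- the big Hankel span V
  have hset : {g : List A → ℝ | ∃ u : List A, g = fun v : List A => f (u ++ v)}
      = Set.range h := by
    ext g; constructor
    · rintro ⟨u, rfl⟩; exact ⟨u, rfl⟩
    · rintro ⟨u, rfl⟩; exact ⟨u, rfl⟩
  rw [hset] at hr
  set V := Submodule.span ℝ (Set.range h) with hVdef
  haveI hVfin : FiniteDimensional ℝ V := Module.finite_of_rank_eq_nat hr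
  have hVr : Module.finrank ℝ V = r := Module.finrank_eq_of_rank_eq hr
  -- the span of rows indexed by P
  set W := Submodule.span ℝ (Set.range (fun p : ↥P => h ↑p)) with hWdef
  have hWV : W ≤ V := Submodule.span_mono (by rintro _ ⟨p, rfl⟩; exact ⟨↑p, rfl⟩)
  haveI hWfin : FiniteDimensional ℝ W := Submodule.finiteDimensional_of_le hWV
  -- restriction to S
  set L : (List A → ℝ) →ₗ[ℝ] (↥S → ℝ) :=
    LinearMap.funLeft ℝ ℝ (fun v : ↥S => (v : List A)) with hLdef
  have hLrow : ∀ u : List A, L (h u) = fun v : ↥S => f (u ++ ↑v) := fun u => rfl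
  have hmapW : Submodule.map L W = Submodule.span ℝ (Set.range (H : ↥P → ↥S → ℝ)) := by
    rw [hWdef, Submodule.map_span, ← Set.range_comp]
    rfl
  have hrowrank : Module.finrank ℝ (Submodule.span ℝ (Set.range (H : ↥P → ↥S → ℝ))) = r := by
    have h1 : Set.range (H : ↥P → ↥S → ℝ) = Set.range (Hᵀᵀ : ↥P → ↥S → ℝ) := by
      rw [Matrix.transpose_transpose]
    rw [h1, show Set.range (Hᵀᵀ : ↥P → ↥S → ℝ) = Set.range Hᵀ.col from rfl,
      ← Matrix.range_mulVecLin Hᵀ, ← hrank]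
    exact Matrix.rank_transpose H
  have hmapWr : Module.finrank ℝ (Submodule.map L W) = r := by rw [hmapW, hrowrank]
  -- W = V
  have hWVeq : W = V := by
    refine Submodule.eq_of_le_of_finrank_le hWV ?_
    rw [hVr, ← hmapWr]
    exact Submodule.finrank_map_le L W
  -- injectivity of L on V
  have hinj : ∀ g ∈ V, L g = 0 → g = 0 := by
    have hrange : Module.finrank ℝ (LinearMap.range (L.domRestrict V)) = r := by
      rw [LinearMap.range_domRestrict, ← hWVeq, hmapWr]
    have hkerV : Module.finrank ℝ (LinearMap.ker (L.domRestrict V)) = 0 := by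
      have := LinearMap.finrank_range_add_finrank_ker (L.domRestrict V)
      rw [hrange, hVr] at this
      omega
    intro g hg h0
    have : (⟨g, hg⟩ : V) ∈ LinearMap.ker (L.domRestrict V) := by
      simpa [LinearMap.mem_ker, LinearMap.domRestrict_apply] using h0
    rw [Submodule.finrank_eq_zero.mp hkerV] at this
    simpa using congrArg Subtype.val this
  -- kernel lemma
  have hker : ∀ y : ↥P → ℝ, y ᵥ* Pm = 0 →
      ∀ v : List A, ∑ p : ↥P, y p * f (↑p ++ v) = 0 := by
    intro y hy v
    have hgV : (∑ p : ↥P, y p • h ↑p) ∈ V := by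
      refine Submodule.sum_mem _ fun p _ => Submodule.smul_mem _ _ ?_
      exact Submodule.subset_span ⟨↑p, rfl⟩
    have hLg : L (∑ p : ↥P, y p • h ↑p) = 0 := by
      have e1 : L (∑ p : ↥P, y p • h ↑p) = y ᵥ* H := by
        rw [map_sum]
        ext v'
        simp [Matrix.vecMul, dotProduct, hLrow, Finset.sum_apply, hHdef, h]
      rw [e1, hfact, ← Matrix.vecMul_vecMul, hy, Matrix.zero_vecMul]
    have hz := hinj _ hgV hLg
    have := congrFun hz v
    simpa [Finset.sum_apply, h] using this
  -- span coefficients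
  have hspan : ∀ u : List A, ∃ c : ↥P → ℝ,
      ∀ v : List A, f (u ++ v) = ∑ p : ↥P, c p * f (↑p ++ v) := by
    intro u
    have hu : h u ∈ W := by
      rw [hWVeq]; exact Submodule.subset_span ⟨u, rfl⟩
    rw [hWdef, Submodule.mem_span_range_iff_exists_fun] at hu
    obtain ⟨c, hc⟩ := hu
    refine ⟨c, fun v => ?_⟩
    have := congrFun hc v
    simpa [Finset.sum_apply, h, eq_comm] using this
  choose c hc using hspan
  -- the state vectors
  set β : List A → (Fin r → ℝ) := fun u => (fun v : ↥S => f (u ++ ↑v)) ᵥ* Sp with hβdef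
  have hrow : ∀ u : List A, (fun v : ↥S => f (u ++ ↑v)) = (c u) ᵥ* H := by
    intro u; ext v
    rw [hc u ↑v]
    simp [Matrix.vecMul, dotProduct, hHdef]
  have hβ : ∀ u : List A, β u = (c u) ᵥ* Pm := by
    intro u
    rw [hβdef]
    simp only
    rw [hrow, hfact, ← Matrix.vecMul_vecMul, Matrix.vecMul_vecMul, hSp, Matrix.vecMul_one]
  -- kernel trick: for d with d ᵥ* Pm = c u ᵥ* Pm, sums agree
  have hsum : ∀ (u : List A) (v : List A),
      ∑ p : ↥P, ((β u) ᵥ* Pp) p * f (↑p ++ v) = f (u ++ v) := by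
    intro u v
    have hy : ((β u) ᵥ* Pp - c u) ᵥ* Pm = 0 := by
      rw [Matrix.sub_vecMul, hβ, Matrix.vecMul_vecMul, hPp, Matrix.vecMul_one, sub_self]
    have hk := hker _ hy v
    rw [show (∑ p : ↥P, (((β u) ᵥ* Pp - c u) p * f (↑p ++ v)))
        = ∑ p : ↥P, ((β u) ᵥ* Pp) p * f (↑p ++ v) - ∑ p : ↥P, c u p * f (↑p ++ v) by
      rw [← Finset.sum_sub_distrib]; congr 1; ext p; simp [sub_mul]] at hk
    rw [← hc u v] at hk
    linarith
  -- transition lemma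
  have htrans : ∀ (u : List A) (σ : A),
      (β u) ᵥ* (Pp * (Matrix.of fun (p : ↥P) (v : ↥S) => f (↑p ++ [σ] ++ ↑v)) * Sp)
        = β (u ++ [σ]) := by
    intro u σ
    rw [← Matrix.vecMul_vecMul, ← Matrix.vecMul_vecMul]
    have key : (β u) ᵥ* Pp ᵥ* (Matrix.of fun (p : ↥P) (v : ↥S) => f (↑p ++ [σ] ++ ↑v))
        = fun v : ↥S => f ((u ++ [σ]) ++ ↑v) := by
      ext v
      have := hsum u ([σ] ++ ↑v)
      simp only [Matrix.vecMul, dotProduct, Matrix.of_apply]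
      rw [List.append_assoc u [σ] ↑v]
      rw [← this]
      congr 1; ext p
      rw [List.append_assoc (↑p) [σ] ↑v]
      simp [Matrix.vecMul, dotProduct]
    rw [key, hβdef]
  -- main induction
  intro w
  have hα0 : (fun v : ↥S => f ↑v) ᵥ* Sp = β [] := by
    rw [hβdef]; simp
  have hmain : ∀ (w' u : List A),
      (β u) ᵥ* ((w'.map fun σ : A =>
          Pp * (Matrix.of fun (p : ↥P) (v : ↥S) => f (↑p ++ [σ] ++ ↑v)) * Sp).prod)
        = β (u ++ w') := by
    intro w'
    induction w' with
    | nil => intro u; simp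
    | cons σ w' ih =>
      intro u
      rw [List.map_cons, List.prod_cons, ← Matrix.vecMul_vecMul, htrans, ih,
        List.append_cons u σ w']
  rw [hα0, hmain w []]
  rw [Matrix.dotProduct_mulVec]
  have := hsum ([] ++ w) []
  simp only [dotProduct]
  simpa using this
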